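/- Let R = ℂ[x,x⁻¹,y,y⁻¹]. Let A, B, C ⊆ R be the ℂ-subspaces spanned by the monomials xⁱyʲ with, respectively: i ≥ 0 and j ≥ 0 (A = ℂ[x,y]); i ≥ 0 and j ∈ ℤ (B = ℂ[x,y,y⁻¹]); i ∈ ℤ and j ≥ 0 (C = ℂ[x,x⁻¹,y]). Then for every natural number m, {f ∈ y⁻¹C : xᵐ·f·A ⊆ B + C} = x⁻ᵐy⁻¹A + C. (For m = 0 this is the self-duality of the lattice (y⁻¹A + C)/C for ⟨1_x⟩ on the chart U_{σ₁}; for m = 1 and m = n it computes the dual lattices arising in the ⟨x⟩ and ⟨1_x⟩ computations for d¹ on the charts U_{σ₁} and U_{σ₄}.) -/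

import Mathlib

noncomputable section
open Pointwise

/-- The Laurent polynomial ring `ℂ[x,x⁻¹,y,y⁻¹]` as the monoid algebra of `ℤ × ℤ` over `ℂ`. -/
abbrev LaurentR : Type := AddMonoidAlgebra ℂ (ℤ × ℤ)

/-- The monomial `xⁱyʲ`. -/
def mono (i j : ℤ) : LaurentR := AddMonoidAlgebra.single (i, j) 1

/-- `x` -/
def xx : LaurentR := mono 1 0
/-- `x⁻¹` -/
def xxInv : LaurentR := mono (-1) 0
/-- `y` -/
def yy : LaurentR := mono 0 1
/-- `y⁻¹` -/
def yyInv : LaurentR := mono 0 (-1)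

/-- `A = ℂ[x,y]`, the ℂ-subspace spanned by monomials `xⁱyʲ` with `i ≥ 0`, `j ≥ 0`. -/
def Asub : Submodule ℂ LaurentR := Submodule.span ℂ {r | ∃ (i : ℕ) (j : ℕ), r = mono i j}
/-- `B = ℂ[x,y,y⁻¹]`, the ℂ-subspace spanned by monomials `xⁱyʲ` with `i ≥ 0`, `j ∈ ℤ`. -/
def Bsub : Submodule ℂ LaurentR := Submodule.span ℂ {r | ∃ (i : ℕ) (j : ℤ), r = mono i j}
/-- `C = ℂ[x,x⁻¹,y]`, the ℂ-subspace spanned by monomials `xⁱyʲ` with `i ∈ ℤ`, `j ≥ 0`. -/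
def Csub : Submodule ℂ LaurentR := Submodule.span ℂ {r | ∃ (i : ℤ) (j : ℕ), r = mono i j}
/-- `ℂ[y,y⁻¹]`, the ℂ-subspace spanned by the monomials `yʲ`, `j ∈ ℤ`. -/
def Dy : Submodule ℂ LaurentR := Submodule.span ℂ {r | ∃ (j : ℤ), r = mono 0 j}
/-- `ℂ[x,x⁻¹]`, the ℂ-subspace spanned by the monomials `xⁱ`, `i ∈ ℤ`. -/
def Dx : Submodule ℂ LaurentR := Submodule.span ℂ {r | ∃ (i : ℤ), r = mono i 0}

/-- `u·L = {u·f : f ∈ L}` as a `ℂ`-submodule of `LaurentR`. -/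
def dil (u : LaurentR) (L : Submodule ℂ LaurentR) : Submodule ℂ LaurentR :=
  L.map (LinearMap.mulLeft ℂ u)

lemma supported_union' (s t : Set (ℤ × ℤ)) :
    AddMonoidAlgebra.supported ℂ ℂ (s ∪ t)
      = AddMonoidAlgebra.supported ℂ ℂ s ⊔ AddMonoidAlgebra.supported ℂ ℂ t := by
  rw [AddMonoidAlgebra.supported_eq_map, AddMonoidAlgebra.supported_eq_map,
    AddMonoidAlgebra.supported_eq_map, Finsupp.supported_union, Submodule.map_sup]

lemma Asub_eq : Asub = AddMonoidAlgebra.supported ℂ ℂ {p : ℤ × ℤ | 0 ≤ p.1 ∧ 0 ≤ p.2} := by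
  rw [Asub, AddMonoidAlgebra.supported_eq_span_single]
  congr 1
  ext r
  constructor
  · rintro ⟨i, j, rfl⟩
    exact ⟨(i, j), ⟨Int.ofNat_nonneg i, Int.ofNat_nonneg j⟩, rfl⟩
  · rintro ⟨⟨i, j⟩, ⟨hi, hj⟩, rfl⟩
    obtain ⟨i', rfl⟩ := Int.eq_ofNat_of_zero_le hi
    obtain ⟨j', rfl⟩ := Int.eq_ofNat_of_zero_le hj
    exact ⟨i', j', rfl⟩

lemma Bsub_eq : Bsub = AddMonoidAlgebra.supported ℂ ℂ {p : ℤ × ℤ | 0 ≤ p.1} := by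
  rw [Bsub, AddMonoidAlgebra.supported_eq_span_single]
  congr 1
  ext r
  constructor
  · rintro ⟨i, j, rfl⟩
    exact ⟨(i, j), Int.ofNat_nonneg i, rfl⟩
  · rintro ⟨⟨i, j⟩, hi, rfl⟩
    obtain ⟨i', rfl⟩ := Int.eq_ofNat_of_zero_le hi
    exact ⟨i', j, rfl⟩

lemma Csub_eq : Csub = AddMonoidAlgebra.supported ℂ ℂ {p : ℤ × ℤ | 0 ≤ p.2} := by
  rw [Csub, AddMonoidAlgebra.supported_eq_span_single]
  congr 1
  ext r
  constructor
  · rintro ⟨i, j, rfl⟩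
    exact ⟨(i, j), Int.ofNat_nonneg j, rfl⟩
  · rintro ⟨⟨i, j⟩, hj, rfl⟩
    obtain ⟨j', rfl⟩ := Int.eq_ofNat_of_zero_le hj
    exact ⟨i, j', rfl⟩

lemma dil_single (a : ℤ × ℤ) (S : Set (ℤ × ℤ)) :
    dil (AddMonoidAlgebra.single a 1) (AddMonoidAlgebra.supported ℂ ℂ S)
      = AddMonoidAlgebra.supported ℂ ℂ {q | -a + q ∈ S} := by
  ext f
  simp only [dil, Submodule.mem_map, LinearMap.mulLeft_apply, AddMonoidAlgebra.mem_supported]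
  constructor
  · rintro ⟨g, hg, rfl⟩
    intro q hq
    have hq' : ((AddMonoidAlgebra.single a 1 * g : LaurentR).coeff q) ≠ 0 := Finsupp.mem_support_iff.1 hq
    rw [AddMonoidAlgebra.coeff_single_mul_apply, one_mul] at hq'
    exact hg (Finset.mem_coe.2 (Finsupp.mem_support_iff.2 hq'))
  · intro hf
    refine ⟨AddMonoidAlgebra.single (-a) 1 * f, ?_, ?_⟩
    · intro p hp
      have hp' : ((AddMonoidAlgebra.single (-a) 1 * f : LaurentR).coeff p) ≠ 0 := Finsupp.mem_support_iff.1 hp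
      rw [AddMonoidAlgebra.coeff_single_mul_apply, one_mul, neg_neg] at hp'
      have := hf (Finset.mem_coe.2 (Finsupp.mem_support_iff.2 hp'))
      simpa using this
    · rw [← mul_assoc, AddMonoidAlgebra.single_mul_single, one_mul, add_neg_cancel,
        ← AddMonoidAlgebra.one_def, one_mul]

lemma support_mul_sub {f g : LaurentR} {S T : Set (ℤ × ℤ)}
    (hf : ↑f.coeff.support ⊆ S) (hg : ↑g.coeff.support ⊆ T) : ↑(f * g).coeff.support ⊆ S + T := by
  classical
  intro p hp
  have h := AddMonoidAlgebra.support_coeff_mul_subset f g (Finset.mem_coe.1 hp)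
  rw [Finset.mem_add] at h
  obtain ⟨b, hb, c, hc, rfl⟩ := h
  exact Set.add_mem_add (hf (Finset.mem_coe.2 hb)) (hg (Finset.mem_coe.2 hc))

lemma one_mem_sup : (1 : LaurentR) ∈ AddMonoidAlgebra.supported ℂ ℂ {p : ℤ × ℤ | 0 ≤ p.1 ∧ 0 ≤ p.2} := by
  rw [AddMonoidAlgebra.mem_supported]
  intro p hp
  have h : p ∈ ({(0 : ℤ × ℤ)} : Finset (ℤ × ℤ)) := by
    rw [AddMonoidAlgebra.one_def] at hp
    exact Finsupp.support_single_subset (Finset.mem_coe.1 hp)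
  simp only [Finset.mem_singleton] at h
  subst h
  exact ⟨le_refl 0, le_refl 0⟩

lemma xx_pow (m : ℕ) : xx ^ m = AddMonoidAlgebra.single (((m : ℤ), (0 : ℤ))) 1 := by
  rw [xx, mono, AddMonoidAlgebra.single_pow, one_pow]
  congr 1
  simp [Prod.ext_iff]

lemma xxInv_pow_mul_yyInv (m : ℕ) :
    xxInv ^ m * yyInv = AddMonoidAlgebra.single ((-(m : ℤ), (-1 : ℤ))) 1 := by
  rw [xxInv, yyInv, mono, mono, AddMonoidAlgebra.single_pow, one_pow,
    AddMonoidAlgebra.single_mul_single, one_mul]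
  congr 1
  simp [Prod.ext_iff]

/-- For every `m : ℕ`,
`{f ∈ y⁻¹C : xᵐ·f·A ⊆ B + C} = x⁻ᵐy⁻¹A + C`. -/
theorem stmt_8 (m : ℕ) :
    {f : LaurentR | f ∈ dil yyInv Csub ∧ ∀ g ∈ Asub, xx ^ m * (f * g) ∈ Bsub ⊔ Csub}
      = ((dil (xxInv ^ m * yyInv) Asub ⊔ Csub : Submodule ℂ LaurentR) : Set LaurentR) := by
  have hyyInv : yyInv = AddMonoidAlgebra.single (((0 : ℤ), (-1 : ℤ))) 1 := rfl
  ext f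
  simp only [Set.mem_setOf_eq, SetLike.mem_coe]
  rw [xxInv_pow_mul_yyInv, hyyInv, Asub_eq, Bsub_eq, Csub_eq, dil_single, dil_single,
    ← supported_union', ← supported_union']
  constructor
  · rintro ⟨h1, h2⟩
    rw [AddMonoidAlgebra.mem_supported] at h1 ⊢
    have h2' := h2 1 one_mem_sup
    rw [mul_one, xx_pow, AddMonoidAlgebra.mem_supported] at h2'
    intro p hp
    have hp' := Finsupp.mem_support_iff.1 (Finset.mem_coe.1 hp)
    have hval : ((AddMonoidAlgebra.single (((m : ℤ), (0 : ℤ))) 1 * f : LaurentR).coeff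
        ((((m : ℤ), (0 : ℤ))) + p)) ≠ 0 := by
      rw [AddMonoidAlgebra.coeff_single_mul_apply, one_mul, neg_add_cancel_left]
      exact hp'
    have hm := h2' (Finset.mem_coe.2 (Finsupp.mem_support_iff.2 hval))
    have hy := h1 hp
    obtain ⟨p1, p2⟩ := p
    simp only [Set.mem_setOf_eq, Set.mem_union, Prod.neg_mk, Prod.mk_add_mk, neg_neg,
      neg_zero, zero_add, add_zero] at hm hy ⊢
    omega
  · intro hU
    rw [AddMonoidAlgebra.mem_supported] at hU
    refine ⟨?_, ?_⟩
    · rw [AddMonoidAlgebra.mem_supported]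
      intro p hp
      have h := hU hp
      obtain ⟨p1, p2⟩ := p
      simp only [Set.mem_setOf_eq, Set.mem_union, Prod.neg_mk, Prod.mk_add_mk, neg_neg,
        neg_zero, zero_add, add_zero] at h ⊢
      omega
    · intro g hg
      rw [AddMonoidAlgebra.mem_supported] at hg ⊢
      rw [xx_pow]
      have hxf : ↑((AddMonoidAlgebra.single (((m : ℤ), (0 : ℤ))) 1 : LaurentR)).coeff.support
          ⊆ ({((m : ℤ), (0 : ℤ))} : Set (ℤ × ℤ)) := by
        intro p hp
        have := Finsupp.support_single_subset (Finset.mem_coe.1 hp)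
        simpa using this
      have hsub := support_mul_sub hxf (support_mul_sub hU hg)
      refine hsub.trans ?_
      intro p hp
      rw [Set.mem_add] at hp
      obtain ⟨b, hb, c, hc, rfl⟩ := hp
      rw [Set.mem_add] at hc
      obtain ⟨d, hd, e, he, rfl⟩ := hc
      rw [Set.mem_singleton_iff] at hb
      subst hb
      obtain ⟨d1, d2⟩ := d
      obtain ⟨e1, e2⟩ := e
      simp only [Set.mem_setOf_eq, Set.mem_union, Prod.neg_mk, Prod.mk_add_mk, neg_neg,
        neg_zero, zero_add, add_zero] at hd he ⊢
      omega
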